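/- Let Q be a forest poset. Then the rewrite relation →_Q on syntax trees on Q is confluent: whenever a syntax tree t rewrites in zero or more steps to r₁ and to r₂, there exists a syntax tree t' to which both r₁ and r₂ rewrite in zero or more steps. -/

import Mathlib

open scoped Classical

/-- The minimum of two comparable elements of a poset. -/
noncomputable def pmin {Q : Type*} [PartialOrder Q] (a b : Q) : Q :=
  if a ≤ b then a else b

/-- A forest poset: for all `a b c`, if `a ≼ c` and `b ≼ c` then `a` and `b` are
comparable. -/
def IsForestPoset (Q : Type*) [PartialOrder Q] : Prop :=
  ∀ a b c : Q, a ≤ c → b ≤ c → a ≤ b ∨ b ≤ a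

section PminLemmas

variable {Q : Type*} [PartialOrder Q]

lemma pmin_le_right (a b : Q) : pmin a b ≤ b := by
  unfold pmin; split_ifs with h; exacts [h, le_rfl]

lemma pmin_le_left {a b : Q} (h : a ≤ b ∨ b ≤ a) : pmin a b ≤ a := by
  unfold pmin; split_ifs with h'; exacts [le_rfl, h.resolve_left h']

lemma pmin_eq_left {a b : Q} (h : a ≤ b) : pmin a b = a := if_pos h

lemma pmin_eq_right {a b : Q} (h : b ≤ a) : pmin a b = b := by
  unfold pmin; split_ifs with h'; exacts [le_antisymm h' h, rfl]

lemma pmin_comm {a b : Q} (h : a ≤ b ∨ b ≤ a) : pmin a b = pmin b a := by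
  rcases h with h | h
  · rw [pmin_eq_left h, pmin_eq_right h]
  · rw [pmin_eq_right h, pmin_eq_left h]

lemma pmin_absorb {a b : Q} : pmin (pmin a b) b = pmin a b :=
  pmin_eq_left (pmin_le_right a b)

lemma pmin_absorb' {a b : Q} (h : a ≤ b ∨ b ≤ a) : pmin a (pmin a b) = pmin a b :=
  pmin_eq_right (pmin_le_left h)

lemma pmin_assoc {a b c : Q} (hab : a ≤ b ∨ b ≤ a) (hbc : b ≤ c ∨ c ≤ b) :
    pmin (pmin a b) c = pmin a (pmin b c) := by
  by_cases h1 : a ≤ b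
  · rw [pmin_eq_left h1]
    by_cases h2 : b ≤ c
    · rw [pmin_eq_left h2, pmin_eq_left (h1.trans h2), pmin_eq_left h1]
    · rw [pmin_eq_right (hbc.resolve_left h2)]
  · have hba := hab.resolve_left h1
    rw [pmin_eq_right hba]
    by_cases h2 : b ≤ c
    · rw [pmin_eq_left h2, pmin_eq_right hba]
    · have hcb := hbc.resolve_left h2
      rw [pmin_eq_right hcb, pmin_eq_right (hcb.trans hba)]

lemma pmin_swap (hQ : IsForestPoset Q) {a b c : Q}
    (hab : a ≤ b ∨ b ≤ a) (hac : a ≤ c ∨ c ≤ a) :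
    pmin (pmin a b) c = pmin (pmin a c) b := by
  by_cases h1 : a ≤ b
  · rw [pmin_eq_left h1]
    by_cases h2 : a ≤ c
    · rw [pmin_eq_left h2, pmin_eq_left h1]
    · have hca := hac.resolve_left h2
      rw [pmin_eq_right hca, pmin_eq_left (hca.trans h1)]
  · have hba := hab.resolve_left h1
    rw [pmin_eq_right hba]
    by_cases h2 : a ≤ c
    · rw [pmin_eq_left h2, pmin_eq_left (hba.trans h2), pmin_eq_right hba]
    · have hca := hac.resolve_left h2
      have hbc := hQ b c a hba hca
      rw [pmin_eq_right hca, pmin_comm hbc]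

lemma cmp_of_le (hQ : IsForestPoset Q) {x b c : Q} (hxb : x ≤ b)
    (hcb : c ≤ b ∨ b ≤ c) : x ≤ c ∨ c ≤ x := by
  rcases hcb with h | h
  · exact hQ x c b hxb h
  · exact Or.inl (hxb.trans h)

end PminLemmas

/-- Syntax trees on `Q`: planar binary trees whose internal nodes are labeled by
elements of `Q`. -/
inductive STree (Q : Type*) where
  | leaf : STree Q
  | node : Q → STree Q → STree Q → STree Q

/-- The one-step rewrite relation `→_Q` on syntax trees. -/
inductive Rew {Q : Type*} [PartialOrder Q] : STree Q → STree Q → Prop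
  | rule1 (a b : Q) (h : a ≤ b ∨ b ≤ a) (t1 t2 t3 : STree Q) :
      Rew (.node a (.node b t1 t2) t3)
        (.node (pmin a b) t1 (.node (pmin a b) t2 t3))
  | rule2 (a b : Q) (h : a ≤ b ∨ b ≤ a) (hne : a ≠ b) (t1 t2 t3 : STree Q) :
      Rew (.node a t1 (.node b t2 t3))
        (.node (pmin a b) t1 (.node (pmin a b) t2 t3))
  | left (a : Q) {t t' : STree Q} (s : STree Q) :
      Rew t t' → Rew (.node a t s) (.node a t' s)
  | right (a : Q) (s : STree Q) {t t' : STree Q} :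
      Rew t t' → Rew (.node a s t) (.node a s t')

section RewLemmas

open STree

variable {Q : Type*} [PartialOrder Q]

lemma rtgL (a : Q) {l l' : STree Q} (r : STree Q)
    (h : Relation.ReflTransGen Rew l l') :
    Relation.ReflTransGen Rew (node a l r) (node a l' r) :=
  h.lift (fun x => node a x r) (fun _ _ hs => Rew.left a r hs)

lemma rtgR (a : Q) (l : STree Q) {r r' : STree Q}
    (h : Relation.ReflTransGen Rew r r') :
    Relation.ReflTransGen Rew (node a l r) (node a l r') :=
  h.lift (fun x => node a l x) (fun _ _ hs => Rew.right a l hs)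

lemma rtg2 {a b : Q} (h : a ≤ b ∨ b ≤ a) (t1 t2 t3 : STree Q) :
    Relation.ReflTransGen Rew (node a t1 (node b t2 t3))
      (node (pmin a b) t1 (node (pmin a b) t2 t3)) := by
  by_cases hne : a = b
  · subst hne
    rw [pmin_eq_left (le_refl a)]
  · exact Relation.ReflTransGen.single (Rew.rule2 a b h hne t1 t2 t3)

lemma routeA {a n : Q} (han : a ≤ n ∨ n ≤ a) (u1 u2 u3 v : STree Q) :
    Relation.ReflTransGen Rew (node a (node n u1 (node n u2 u3)) v)
      (node (pmin a n) u1 (node (pmin a n) u2 (node (pmin a n) u3 v))) := by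
  refine .trans (.single (Rew.rule1 a n han u1 (node n u2 u3) v)) ?_
  have h := rtgR (pmin a n) u1
    (Relation.ReflTransGen.single
      (Rew.rule1 (pmin a n) n (Or.inl (pmin_le_right a n)) u2 u3 v))
  rwa [pmin_absorb] at h

lemma routeB {a n : Q} (han : a ≤ n ∨ n ≤ a) (u1 u2 u3 u4 : STree Q) :
    Relation.ReflTransGen Rew (node a u1 (node n u2 (node n u3 u4)))
      (node (pmin a n) u1 (node (pmin a n) u2 (node (pmin a n) u3 u4))) := by
  refine .trans (rtg2 han u1 u2 (node n u3 u4)) ?_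
  have h := rtgR (pmin a n) u1 (rtg2 (Or.inl (pmin_le_right a n)) u2 u3 u4)
  rwa [pmin_absorb] at h

lemma routeC {m c : Q} (hmc : m ≤ c ∨ c ≤ m) (u1 u2 u3 v : STree Q) :
    Relation.ReflTransGen Rew (node m (node c u1 u2) (node m u3 v))
      (node (pmin m c) u1 (node (pmin m c) u2 (node (pmin m c) u3 v))) := by
  refine .trans (.single (Rew.rule1 m c hmc u1 u2 (node m u3 v))) ?_
  have h := rtgR (pmin m c) u1 (rtg2 (Or.inl (pmin_le_left hmc)) u2 u3 v)
  rwa [pmin_eq_left (pmin_le_left hmc)] at h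

lemma routeD {m c : Q} (hmc : m ≤ c ∨ c ≤ m) (u1 u2 u3 v : STree Q) :
    Relation.ReflTransGen Rew (node m u1 (node m (node c u2 u3) v))
      (node (pmin m c) u1 (node (pmin m c) u2 (node (pmin m c) u3 v))) := by
  refine .trans (rtgR m u1 (.single (Rew.rule1 m c hmc u2 u3 v))) ?_
  have h := rtg2 (Or.inr (pmin_le_left hmc) : m ≤ pmin m c ∨ pmin m c ≤ m)
    u1 u2 (node (pmin m c) u3 v)
  rwa [pmin_absorb' hmc] at h

lemma routeE {m c : Q} (hmc : m ≤ c ∨ c ≤ m) (u1 u2 u3 u4 : STree Q) :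
    Relation.ReflTransGen Rew (node m u1 (node m u2 (node c u3 u4)))
      (node (pmin m c) u1 (node (pmin m c) u2 (node (pmin m c) u3 u4))) := by
  refine .trans (rtgR m u1 (rtg2 hmc u2 u3 u4)) ?_
  have h := rtg2 (Or.inr (pmin_le_left hmc) : m ≤ pmin m c ∨ pmin m c ≤ m)
    u1 u2 (node (pmin m c) u3 u4)
  rwa [pmin_absorb' hmc] at h

lemma routeF {n b : Q} (hnb : n ≤ b ∨ b ≤ n) (t1 t2 t3 t4 : STree Q) :
    Relation.ReflTransGen Rew (node n (node b t1 t2) (node n t3 t4))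
      (node (pmin n b) t1 (node (pmin n b) t2 (node (pmin n b) t3 t4))) := by
  refine .trans (.single (Rew.rule1 n b hnb t1 t2 (node n t3 t4))) ?_
  have h := rtgR (pmin n b) t1 (rtg2 (Or.inl (pmin_le_left hnb)) t2 t3 t4)
  rwa [pmin_eq_left (pmin_le_left hnb)] at h

lemma cp1 (hQ : IsForestPoset Q) {a b c : Q} (hab : a ≤ b ∨ b ≤ a) (hac : a ≤ c ∨ c ≤ a)
    (t1 t2 t3 t4 : STree Q) :
    ∃ u, Relation.ReflTransGen Rew
        (node (pmin a b) t1 (node (pmin a b) t2 (node c t3 t4))) u ∧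
      Relation.ReflTransGen Rew
        (node (pmin a c) (node b t1 t2) (node (pmin a c) t3 t4)) u := by
  have hmc : pmin a b ≤ c ∨ c ≤ pmin a b := cmp_of_le hQ (pmin_le_left hab) hac.symm
  have hnb : pmin a c ≤ b ∨ b ≤ pmin a c := cmp_of_le hQ (pmin_le_left hac) hab.symm
  refine ⟨_, routeE hmc t1 t2 t3 t4, ?_⟩
  have h := routeF hnb t1 t2 t3 t4
  rwa [← pmin_swap hQ hab hac] at h

lemma cp2 (hQ : IsForestPoset Q) {a b c : Q} (hab : a ≤ b ∨ b ≤ a) (hbc : b ≤ c ∨ c ≤ b)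
    (u1 u2 u3 v : STree Q) :
    ∃ u, Relation.ReflTransGen Rew
        (node (pmin a b) (node c u1 u2) (node (pmin a b) u3 v)) u ∧
      Relation.ReflTransGen Rew
        (node a (node (pmin b c) u1 (node (pmin b c) u2 u3)) v) u := by
  have hmc : pmin a b ≤ c ∨ c ≤ pmin a b := cmp_of_le hQ (pmin_le_right a b) hbc.symm
  have han : a ≤ pmin b c ∨ pmin b c ≤ a :=
    (cmp_of_le hQ (pmin_le_left hbc) hab).symm
  refine ⟨_, routeC hmc u1 u2 u3 v, ?_⟩
  have h := routeA han u1 u2 u3 v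
  rwa [← pmin_assoc hab hbc] at h

lemma cp3 (hQ : IsForestPoset Q) {a b c : Q} (hab : a ≤ b ∨ b ≤ a) (hbc : b ≤ c ∨ c ≤ b)
    (u1 u2 u3 v : STree Q) :
    ∃ u, Relation.ReflTransGen Rew
        (node (pmin a b) u1 (node (pmin a b) (node c u2 u3) v)) u ∧
      Relation.ReflTransGen Rew
        (node a (node (pmin b c) u1 (node (pmin b c) u2 u3)) v) u := by
  have hmc : pmin a b ≤ c ∨ c ≤ pmin a b := cmp_of_le hQ (pmin_le_right a b) hbc.symm
  have han : a ≤ pmin b c ∨ pmin b c ≤ a :=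
    (cmp_of_le hQ (pmin_le_left hbc) hab).symm
  refine ⟨_, routeD hmc u1 u2 u3 v, ?_⟩
  have h := routeA han u1 u2 u3 v
  rwa [← pmin_assoc hab hbc] at h

lemma cp4 (hQ : IsForestPoset Q) {a b c : Q} (hab : a ≤ b ∨ b ≤ a) (hbc : b ≤ c ∨ c ≤ b)
    (u1 u2 u3 u4 : STree Q) :
    ∃ u, Relation.ReflTransGen Rew
        (node (pmin a b) u1 (node (pmin a b) (node c u2 u3) u4)) u ∧
      Relation.ReflTransGen Rew
        (node a u1 (node (pmin b c) u2 (node (pmin b c) u3 u4))) u := by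
  have hmc : pmin a b ≤ c ∨ c ≤ pmin a b := cmp_of_le hQ (pmin_le_right a b) hbc.symm
  have han : a ≤ pmin b c ∨ pmin b c ≤ a :=
    (cmp_of_le hQ (pmin_le_left hbc) hab).symm
  refine ⟨_, routeD hmc u1 u2 u3 u4, ?_⟩
  have h := routeB han u1 u2 u3 u4
  rwa [← pmin_assoc hab hbc] at h

lemma cp5 (hQ : IsForestPoset Q) {a b c : Q} (hab : a ≤ b ∨ b ≤ a) (hbc : b ≤ c ∨ c ≤ b)
    (u1 u2 u3 u4 : STree Q) :
    ∃ u, Relation.ReflTransGen Rew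
        (node (pmin a b) u1 (node (pmin a b) u2 (node c u3 u4))) u ∧
      Relation.ReflTransGen Rew
        (node a u1 (node (pmin b c) u2 (node (pmin b c) u3 u4))) u := by
  have hmc : pmin a b ≤ c ∨ c ≤ pmin a b := cmp_of_le hQ (pmin_le_right a b) hbc.symm
  have han : a ≤ pmin b c ∨ pmin b c ≤ a :=
    (cmp_of_le hQ (pmin_le_left hbc) hab).symm
  refine ⟨_, routeE hmc u1 u2 u3 u4, ?_⟩
  have h := routeB han u1 u2 u3 u4
  rwa [← pmin_assoc hab hbc] at h

end RewLemmas

section LocConf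

open STree

variable {Q : Type*} [PartialOrder Q]

lemma locconf (hQ : IsForestPoset Q) {t r1 : STree Q} (h1 : Rew t r1) :
    ∀ r2 : STree Q, Rew t r2 →
      ∃ u, Relation.ReflTransGen Rew r1 u ∧ Relation.ReflTransGen Rew r2 u := by
  induction h1 with
  | rule1 a b hab t1 t2 t3 =>
    intro r2 h2
    cases h2
    case rule1 => exact ⟨_, .refl, .refl⟩
    case rule2 =>
      rename_i c v2 v3 hac hne
      exact cp1 hQ hab hac t1 t2 v2 v3
    case left =>
      rename_i l' hl
      cases hl
      case rule1 =>
        rename_i c u1 u2 hbc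
        exact cp2 hQ hab hbc u1 u2 t2 t3
      case rule2 =>
        rename_i c u2 u3 hbc hne2
        exact cp3 hQ hab hbc t1 u2 u3 t3
      case left =>
        rename_i t1' hstep
        exact ⟨node (pmin a b) t1' (node (pmin a b) t2 t3),
          .single (Rew.left _ _ hstep), .single (Rew.rule1 a b hab t1' t2 t3)⟩
      case right =>
        rename_i t2' hstep
        exact ⟨node (pmin a b) t1 (node (pmin a b) t2' t3),
          .single (Rew.right _ _ (Rew.left _ _ hstep)),
          .single (Rew.rule1 a b hab t1 t2' t3)⟩
    case right =>
      rename_i t3' hstep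
      exact ⟨node (pmin a b) t1 (node (pmin a b) t2 t3'),
        .single (Rew.right _ _ (Rew.right _ _ hstep)),
        .single (Rew.rule1 a b hab t1 t2 t3')⟩
  | rule2 a b hab hne t1 t2 t3 =>
    intro r2 h2
    cases h2
    case rule1 =>
      rename_i c u1 u2 hac
      obtain ⟨u, hu1, hu2⟩ := cp1 hQ hac hab u1 u2 t2 t3
      exact ⟨u, hu2, hu1⟩
    case rule2 => exact ⟨_, .refl, .refl⟩
    case left =>
      rename_i t1' hstep
      exact ⟨node (pmin a b) t1' (node (pmin a b) t2 t3),
        .single (Rew.left _ _ hstep),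
        .single (Rew.rule2 a b hab hne t1' t2 t3)⟩
    case right =>
      rename_i x hl
      cases hl
      case rule1 =>
        rename_i c u2 u3 hbc
        exact cp4 hQ hab hbc t1 u2 u3 t3
      case rule2 =>
        rename_i c u3 u4 hbc hne2
        exact cp5 hQ hab hbc t1 t2 u3 u4
      case left =>
        rename_i t2' hstep
        exact ⟨node (pmin a b) t1 (node (pmin a b) t2' t3),
          .single (Rew.right _ _ (Rew.left _ _ hstep)),
          .single (Rew.rule2 a b hab hne t1 t2' t3)⟩
      case right =>
        rename_i t3' hstep
        exact ⟨node (pmin a b) t1 (node (pmin a b) t2 t3'),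
          .single (Rew.right _ _ (Rew.right _ _ hstep)),
          .single (Rew.rule2 a b hab hne t1 t2 t3')⟩
  | left a s hstep ih =>
    rename_i l l'
    intro r2 h2
    cases h2
    case rule1 =>
      rename_i b t1 t2 hab
      cases hstep
      case rule1 =>
        rename_i c u1 u2 hbc
        obtain ⟨u, hu1, hu2⟩ := cp2 hQ hab hbc u1 u2 t2 s
        exact ⟨u, hu2, hu1⟩
      case rule2 =>
        rename_i c u2 u3 hbc hne2
        obtain ⟨u, hu1, hu2⟩ := cp3 hQ hab hbc t1 u2 u3 s
        exact ⟨u, hu2, hu1⟩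
      case left =>
        rename_i t1' hstep2
        exact ⟨node (pmin a b) t1' (node (pmin a b) t2 s),
          .single (Rew.rule1 a b hab t1' t2 s), .single (Rew.left _ _ hstep2)⟩
      case right =>
        rename_i t2' hstep2
        exact ⟨node (pmin a b) t1 (node (pmin a b) t2' s),
          .single (Rew.rule1 a b hab t1 t2' s),
          .single (Rew.right _ _ (Rew.left _ _ hstep2))⟩
    case rule2 =>
      rename_i b t2 t3 hab hne
      exact ⟨node (pmin a b) l' (node (pmin a b) t2 t3),
        .single (Rew.rule2 a b hab hne l' t2 t3), .single (Rew.left _ _ hstep)⟩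
    case left =>
      rename_i l2 hstep2
      obtain ⟨u, hu1, hu2⟩ := ih _ hstep2
      exact ⟨node a u s, rtgL a s hu1, rtgL a s hu2⟩
    case right =>
      rename_i s2 hstep2
      exact ⟨node a l' s2, .single (Rew.right _ _ hstep2), .single (Rew.left _ _ hstep)⟩
  | right a s hstep ih =>
    rename_i rc rc'
    intro r2 h2
    cases h2
    case rule1 =>
      rename_i b t1 t2 hab
      exact ⟨node (pmin a b) t1 (node (pmin a b) t2 rc'),
        .single (Rew.rule1 a b hab t1 t2 rc'),
        .single (Rew.right _ _ (Rew.right _ _ hstep))⟩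
    case rule2 =>
      rename_i b t2 t3 hab hne
      cases hstep
      case rule1 =>
        rename_i c u2 u3 hbc
        obtain ⟨u, hu1, hu2⟩ := cp4 hQ hab hbc s u2 u3 t3
        exact ⟨u, hu2, hu1⟩
      case rule2 =>
        rename_i c u3 u4 hbc hne2
        obtain ⟨u, hu1, hu2⟩ := cp5 hQ hab hbc s t2 u3 u4
        exact ⟨u, hu2, hu1⟩
      case left =>
        rename_i t2' hstep2
        exact ⟨node (pmin a b) s (node (pmin a b) t2' t3),
          .single (Rew.rule2 a b hab hne s t2' t3),
          .single (Rew.right _ _ (Rew.left _ _ hstep2))⟩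
      case right =>
        rename_i t3' hstep2
        exact ⟨node (pmin a b) s (node (pmin a b) t2 t3'),
          .single (Rew.rule2 a b hab hne s t2 t3'),
          .single (Rew.right _ _ (Rew.right _ _ hstep2))⟩
    case left =>
      rename_i s2 hstep2
      exact ⟨node a s2 rc', .single (Rew.left _ _ hstep2), .single (Rew.right _ _ hstep)⟩
    case right =>
      rename_i rc2 hstep2
      obtain ⟨u, hu1, hu2⟩ := ih _ hstep2
      exact ⟨node a s u, rtgR a s hu1, rtgR a s hu2⟩

end LocConf

section Termination

open STree

variable {Q : Type*} [Fintype Q] [PartialOrder Q]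

noncomputable def rankQ (a : Q) : ℕ :=
  (Finset.univ.filter fun x : Q => x ≤ a).card

lemma rankQ_mono {a b : Q} (h : a ≤ b) : rankQ a ≤ rankQ b := by
  apply Finset.card_le_card
  intro x hx
  simp only [Finset.mem_filter, Finset.mem_univ, true_and] at *
  exact hx.trans h

lemma rankQ_strict {a b : Q} (h : a ≤ b) (hne : a ≠ b) : rankQ a < rankQ b := by
  apply Finset.card_lt_card
  constructor
  · intro x hx
    simp only [Finset.mem_filter, Finset.mem_univ, true_and] at *
    exact hx.trans h
  · intro hsub
    have hb : b ∈ Finset.univ.filter fun x : Q => x ≤ b := by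
      simp only [Finset.mem_filter, Finset.mem_univ, true_and]
      exact le_rfl
    have := hsub hb
    simp only [Finset.mem_filter, Finset.mem_univ, true_and] at this
    exact hne (le_antisymm h this)

def fsize {Q' : Type*} : STree Q' → ℕ
  | .leaf => 1
  | .node _ l r => 2 * fsize l + fsize r

noncomputable def gsum : STree Q → ℕ
  | .leaf => 0
  | .node a l r => rankQ a + gsum l + gsum r

lemma fsize_pos {Q' : Type*} (t : STree Q') : 1 ≤ fsize t := by
  induction t with
  | leaf => simp [fsize]
  | node a l r ihl ihr => simp only [fsize]; omega

lemma rew_decrease {t t' : STree Q} (h : Rew t t') :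
    fsize t' ≤ fsize t ∧ gsum t' ≤ gsum t ∧
      fsize t' + gsum t' < fsize t + gsum t := by
  induction h with
  | rule1 a b hab t1 t2 t3 =>
    have h1 := fsize_pos t1
    have h2 : rankQ (pmin a b) ≤ rankQ a := rankQ_mono (pmin_le_left hab)
    have h3 : rankQ (pmin a b) ≤ rankQ b := rankQ_mono (pmin_le_right a b)
    simp only [fsize, gsum]
    omega
  | rule2 a b hab hne t1 t2 t3 =>
    have h4 : rankQ (pmin a b) + rankQ (pmin a b) < rankQ a + rankQ b := by
      rcases hab with h | h
      · rw [pmin_eq_left h]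
        have := rankQ_strict h hne
        omega
      · rw [pmin_eq_right h]
        have := rankQ_strict h (Ne.symm hne)
        omega
    simp only [fsize, gsum]
    omega
  | left a s hst ih =>
    obtain ⟨i1, i2, i3⟩ := ih
    simp only [fsize, gsum]
    omega
  | right a s hst ih =>
    obtain ⟨i1, i2, i3⟩ := ih
    simp only [fsize, gsum]
    omega

lemma rew_wf : WellFounded (fun x y : STree Q => Rew y x) := by
  have key : ∀ x y : STree Q, Rew y x →
      fsize x + gsum x < fsize y + gsum y := fun x y h => (rew_decrease h).2.2
  exact Subrelation.wf (fun {x y} h => key x y h)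
    (InvImage.wf (fun t : STree Q => fsize t + gsum t) Nat.lt_wfRel.wf)

end Termination


/-- For a forest poset `Q`, the rewrite relation `→_Q` on syntax trees is confluent:
whenever `t` rewrites in zero or more steps to `r₁` and to `r₂`, there is a tree `t'` to
which both `r₁` and `r₂` rewrite in zero or more steps. -/
theorem rew_confluent {Q : Type*} [Fintype Q] [PartialOrder Q]
    (hQ : IsForestPoset Q) (t r₁ r₂ : STree Q)
    (h₁ : Relation.ReflTransGen Rew t r₁) (h₂ : Relation.ReflTransGen Rew t r₂) :
    ∃ t' : STree Q, Relation.ReflTransGen Rew r₁ t' ∧ Relation.ReflTransGen Rew r₂ t' := by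
  have main : ∀ t : STree Q, ∀ r1 r2 : STree Q,
      Relation.ReflTransGen Rew t r1 → Relation.ReflTransGen Rew t r2 →
      ∃ u, Relation.ReflTransGen Rew r1 u ∧ Relation.ReflTransGen Rew r2 u := by
    intro t
    refine rew_wf.induction
      (C := fun t => ∀ r1 r2 : STree Q,
        Relation.ReflTransGen Rew t r1 → Relation.ReflTransGen Rew t r2 →
        ∃ u, Relation.ReflTransGen Rew r1 u ∧ Relation.ReflTransGen Rew r2 u) t ?_
    intro x ih r1 r2 h1 h2
    rcases Relation.ReflTransGen.cases_head h1 with rfl | ⟨a, hxa, har1⟩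
    · exact ⟨r2, h2, .refl⟩
    rcases Relation.ReflTransGen.cases_head h2 with rfl | ⟨b, hxb, hbr2⟩
    · exact ⟨r1, .refl, h1⟩
    obtain ⟨c, hac, hbc⟩ := locconf hQ hxa _ hxb
    obtain ⟨d, hr1d, hcd⟩ := ih a hxa r1 c har1 hac
    obtain ⟨e, hde, hr2e⟩ := ih b hxb d r2 (hbc.trans hcd) hbr2
    exact ⟨e, hr1d.trans hde, hr2e⟩
  exact main t r₁ r₂ h₁ h₂
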